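/- Let f and g be probability densities on ℝ and ℝ^d respectively, and for each ψ ∈ ℝ^d let S_ψ ⊆ ℝ be measurable. Let Ψ^{(2)}, ..., Ψ^{(N)} be i.i.d. with density g, and let (Φ, Ψ^{(1)}) be drawn, independently of the others, from the density proportional to f(φ) g(ψ) 1{φ ∈ S_ψ} (assumed normalizable). Define W = Σ_{j=1}^N w_j with w_j = ∫_{S_{Ψ^{(j)}}} f, and p̂_N = (Σ_{j=1}^N ∫_{S_{Ψ^{(j)}} ∩ {|y| ≥ |Φ|}} f) / W. Assume for g-almost-every collection (ψ^{(1)},...,ψ^{(N)}) that the conditional distribution of |Φ| given Ψ^{(1:N)} is continuous. Then p̂_N is uniformly distributed on [0,1]. -/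

import Mathlib

open MeasureTheory Set

lemma layer_aux (T : ℝ → ℝ) (h : ℝ → ℝ)
    (hT_cont : Continuous T) (hT_anti : Antitone T)
    (hT_small : ∀ c > (0:ℝ), ∃ t, T t ≤ c)
    (hh : ∀ t, ∫ φ in {φ : ℝ | t ≤ |φ|}, h φ = T t)
    (c : ℝ) (hc0 : 0 ≤ c) (hcW : c ≤ T 0) :
    ∫ φ in {φ : ℝ | T |φ| ≤ c}, h φ = c := by
  set A : Set ℝ := {t | T t ≤ c} with hA_def
  have hAupper : ∀ {s t : ℝ}, s ∈ A → s ≤ t → t ∈ A := by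
    intro s t hs hst
    exact le_trans (hT_anti hst) hs
  by_cases hA : A.Nonempty
  · by_cases hbdd : BddBelow A
    · set m := sInf A with hm_def
      have hclosed : IsClosed A := isClosed_Iic.preimage hT_cont
      have hmA : m ∈ A := hclosed.csInf_mem hA hbdd
      have hTm_le : T m ≤ c := hmA
      have hTm_ge : c ≤ T m := by
        have htend : Filter.Tendsto T (nhdsWithin m (Set.Iio m)) (nhds (T m)) :=
          (hT_cont.continuousAt).continuousWithinAt
        refine ge_of_tendsto htend ?_
        refine eventually_nhdsWithin_of_forall (fun t ht => ?_)
        by_contra hlt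
        push_neg at hlt
        have htA : t ∈ A := le_of_lt hlt
        exact absurd (csInf_le hbdd htA) (not_le.mpr ht)
      have hTm : T m = c := le_antisymm hTm_le hTm_ge
      have hset : {φ : ℝ | T |φ| ≤ c} = {φ : ℝ | m ≤ |φ|} := by
        ext φ
        constructor
        · intro hφ
          exact csInf_le hbdd hφ
        · intro hφ
          exact hAupper hmA hφ
      rw [hset, hh m, hTm]
    · have hAuniv : A = univ := by
        ext t
        simp only [mem_univ, iff_true]
        rw [bddBelow_def] at hbdd
        push_neg at hbdd
        obtain ⟨a, haA, hat⟩ := hbdd t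
        exact hAupper haA (le_of_lt hat)
      have h0A : (0:ℝ) ∈ A := by rw [hAuniv]; trivial
      have hc : c = T 0 := le_antisymm hcW h0A
      have hset : {φ : ℝ | T |φ| ≤ c} = {φ : ℝ | (0:ℝ) ≤ |φ|} := by
        ext φ
        simp only [mem_setOf_eq, abs_nonneg, iff_true]
        have : |φ| ∈ A := by rw [hAuniv]; trivial
        exact this
      rw [hset, hh 0, hc]
  · have hc : c = 0 := by
      by_contra hcne
      have hcpos : 0 < c := lt_of_le_of_ne hc0 (Ne.symm hcne)
      obtain ⟨t, ht⟩ := hT_small c hcpos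
      exact hA ⟨t, ht⟩
    have hset : {φ : ℝ | T |φ| ≤ c} = (∅ : Set ℝ) := by
      ext φ
      simp only [mem_setOf_eq, mem_empty_iff_false, iff_false]
      intro hφ
      exact hA ⟨|φ|, hφ⟩
    rw [hset, hc, Measure.restrict_empty, integral_zero_measure]

/-- Theorem 2 of the paper: the Monte Carlo post-selection p-value `p̂_N` is exactly
uniform on `[0,1]` for any `N`, when the pair `(Φ, Ψ⁽¹⁾)` has the selection-conditioned
joint density and `Ψ⁽²⁾, …, Ψ⁽ᴺ⁾` are i.i.d. from the null nuisance density `g`. -/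
theorem stmt7 (d N : ℕ) (hN : 0 < N)
    (f : ℝ → ℝ) (hf_nonneg : ∀ x, 0 ≤ f x) (hf_meas : Measurable f)
    (hf_int : Integrable f) (hf_prob : ∫ x, f x = 1)
    (g : (Fin d → ℝ) → ℝ) (hg_nonneg : ∀ ψ, 0 ≤ g ψ) (hg_meas : Measurable g)
    (hg_prob : ∫ ψ, g ψ = 1)
    (S : (Fin d → ℝ) → Set ℝ) (hSmeas : ∀ ψ, MeasurableSet (S ψ))
    (J : ℝ × (Fin N → (Fin d → ℝ)) → ℝ)
    (hJ : ∀ p, J p =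
      (S (p.2 ⟨0, hN⟩)).indicator (fun φ => f φ * ∏ j, g (p.2 j)) p.1)
    (hJ_meas : Measurable J) (hJ_int : Integrable J)
    (hJpos : 0 < ∫ p, J p)
    (hcont : ∀ ψs : Fin N → (Fin d → ℝ),
      Continuous fun t : ℝ => ∑ j, ∫ y in S (ψs j) ∩ {y | t ≤ |y|}, f y)
    (phat : ℝ × (Fin N → (Fin d → ℝ)) → ℝ)
    (hphat : ∀ p, phat p =
      (∑ j, ∫ y in S (p.2 j) ∩ {y | |p.1| ≤ |y|}, f y) / ∑ j, ∫ y in S (p.2 j), f y)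
    (hphat_meas : Measurable phat) :
    ∀ α ∈ Set.Icc (0:ℝ) 1,
      (∫ p in {p | phat p ≤ α}, J p) / (∫ p, J p) = α := by
  have hz : (⟨0, hN⟩ : Fin N) = ⟨0, hN⟩ := rfl
  set z : Fin N := ⟨0, hN⟩ with hz_def
  -- notation
  set T : (Fin N → (Fin d → ℝ)) → ℝ → ℝ :=
    fun ψs t => ∑ j, ∫ y in S (ψs j) ∩ {y | t ≤ |y|}, f y with hT_def
  set G : (Fin N → (Fin d → ℝ)) → ℝ := fun ψs => ∏ j, g (ψs j) with hG_def
  set h : (Fin N → (Fin d → ℝ)) → ℝ → ℝ :=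
    fun ψs φ => ∑ k, (S (ψs k)).indicator f φ with hh_def
  have huniv0 : {y : ℝ | (0:ℝ) ≤ |y|} = univ := eq_univ_of_forall fun y => abs_nonneg y
  have hT0 : ∀ ψs, (∑ j, ∫ y in S (ψs j), f y) = T ψs 0 := by
    intro ψs
    simp only [hT_def, huniv0, Set.inter_univ]
  have hphat' : ∀ p, phat p = T p.2 |p.1| / T p.2 0 := by
    intro p
    rw [hphat p, hT0]
  have hT_nonneg : ∀ ψs t, 0 ≤ T ψs t := by
    intro ψs t
    exact Finset.sum_nonneg fun j _ => integral_nonneg fun y => hf_nonneg y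
  have hT_anti : ∀ ψs, Antitone (T ψs) := by
    intro ψs a b hab
    refine Finset.sum_le_sum fun j _ => ?_
    refine setIntegral_mono_set hf_int.integrableOn
      (Filter.Eventually.of_forall fun y => hf_nonneg y) ?_
    refine HasSubset.Subset.eventuallyLE ?_
    exact Set.inter_subset_inter_right _ fun y hy => le_trans hab hy
  have hT_small : ∀ ψs, ∀ c > (0:ℝ), ∃ t, T ψs t ≤ c := by
    intro ψs c hc
    have hmeasA : ∀ (j : Fin N) (n : ℕ), MeasurableSet (S (ψs j) ∩ {y : ℝ | (n:ℝ) ≤ |y|}) :=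
      fun j n => (hSmeas _).inter ((isClosed_le continuous_const continuous_abs).measurableSet)
    have hjten : ∀ j : Fin N, Filter.Tendsto
        (fun n : ℕ => ∫ y in S (ψs j) ∩ {y : ℝ | (n:ℝ) ≤ |y|}, f y) Filter.atTop (nhds 0) := by
      intro j
      have hdc : Filter.Tendsto
          (fun n : ℕ => ∫ y, (S (ψs j) ∩ {y : ℝ | (n:ℝ) ≤ |y|}).indicator f y)
          Filter.atTop (nhds (∫ y : ℝ, (0:ℝ))) := by
        refine tendsto_integral_of_dominated_convergence (fun y => |f y|)
          (fun n => (hf_meas.indicator (hmeasA j n)).aestronglyMeasurable) hf_int.abs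
          (fun n => Filter.Eventually.of_forall fun y => ?_)
          (Filter.Eventually.of_forall fun y => ?_)
        · simpa [Real.norm_eq_abs] using
            norm_indicator_le_norm_self (f := f) (s := S (ψs j) ∩ {y : ℝ | (n:ℝ) ≤ |y|}) (a := y)
        · have hev : ∀ᶠ n : ℕ in Filter.atTop,
              (S (ψs j) ∩ {y : ℝ | (n:ℝ) ≤ |y|}).indicator f y = 0 := by
            filter_upwards [Filter.eventually_gt_atTop ⌈|y|⌉₊] with n hn
            refine Set.indicator_of_notMem (fun hy => ?_) f
            have h1 : (n:ℝ) ≤ |y| := hy.2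
            have h2 : |y| < n := lt_of_le_of_lt (Nat.le_ceil _) (by exact_mod_cast hn)
            linarith
          exact Filter.Tendsto.congr' (hev.mono fun n hn => hn.symm) tendsto_const_nhds
      simp only [integral_zero] at hdc
      refine hdc.congr fun n => ?_
      rw [integral_indicator (hmeasA j n)]
    have htend : Filter.Tendsto (fun n : ℕ => T ψs n) Filter.atTop (nhds 0) := by
      have := tendsto_finset_sum Finset.univ (fun j _ => hjten j)
      simpa using this
    obtain ⟨n, hn⟩ := (htend.eventually_lt_const hc).exists
    exact ⟨n, le_of_lt hn⟩
  have hh_int : ∀ ψs, Integrable (h ψs) :=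
    fun ψs => integrable_finset_sum _ fun k _ => hf_int.indicator (hSmeas _)
  have hh_nonneg : ∀ ψs φ, 0 ≤ h ψs φ := fun ψs φ =>
    Finset.sum_nonneg fun k _ => Set.indicator_nonneg (fun y _ => hf_nonneg y) φ
  have hht : ∀ ψs t, ∫ φ in {φ : ℝ | t ≤ |φ|}, h ψs φ = T ψs t := by
    intro ψs t
    rw [hh_def]
    rw [integral_finset_sum _ fun k _ => (hf_int.indicator (hSmeas _)).integrableOn]
    refine Finset.sum_congr rfl fun k _ => ?_
    rw [setIntegral_indicator (hSmeas _), Set.inter_comm]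
  have hsetP_meas : ∀ β : ℝ, MeasurableSet {p | phat p ≤ β} := fun β =>
    measurableSet_le hphat_meas measurable_const
  have hphat_le_one : ∀ p, phat p ≤ 1 := by
    intro p
    rw [hphat' p]
    rcases eq_or_lt_of_le (hT_nonneg p.2 0) with hW | hW
    · rw [← hW, div_zero]
      norm_num
    · rw [div_le_one hW]
      exact hT_anti p.2 (abs_nonneg p.1)
  -- the master computation
  set C : ℝ := ∫ ψs, T ψs 0 * G ψs with hC_def
  have master : ∀ β : ℝ, 0 ≤ β → β ≤ 1 →
      (N:ℝ) * ∫ p in {p | phat p ≤ β}, J p = β * C := by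
    intro β hβ0 hβ1
    set P : Set (ℝ × (Fin N → (Fin d → ℝ))) := {p | phat p ≤ β} with hP_def
    have hP_meas : MeasurableSet P := hsetP_meas β
    set Jk : Fin N → ℝ × (Fin N → (Fin d → ℝ)) → ℝ :=
      fun k p => (S (p.2 k)).indicator (fun φ => f φ * ∏ j, g (p.2 j)) p.1 with hJk_def
    have hconj : ∀ k : Fin N,
        ((∫ p, P.indicator J p) = ∫ p, P.indicator (Jk k) p) ∧ Integrable (Jk k) := by
      intro k
      set σ : Equiv.Perm (Fin N) := Equiv.swap z k with hσ_def
      set em : (Fin N → (Fin d → ℝ)) ≃ᵐ (Fin N → (Fin d → ℝ)) :=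
        MeasurableEquiv.piCongrLeft (fun _ => (Fin d → ℝ)) σ with hem_def
      have hem_apply : ∀ (ψs : Fin N → (Fin d → ℝ)) (i : Fin N), em ψs i = ψs (σ i) := by
        intro ψs i
        rw [hem_def]
        rw [MeasurableEquiv.coe_piCongrLeft]
        conv_lhs => rw [show i = σ (σ i) from (Equiv.swap_apply_self z k i).symm]
        exact Equiv.piCongrLeft_apply_apply (fun _ => (Fin d → ℝ)) σ ψs (σ i)
      set e : (ℝ × (Fin N → (Fin d → ℝ))) ≃ᵐ (ℝ × (Fin N → (Fin d → ℝ))) :=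
        (MeasurableEquiv.refl ℝ).prodCongr em with he_def
      have he_apply : ∀ p : ℝ × (Fin N → (Fin d → ℝ)), e p = (p.1, em p.2) := fun p => rfl
      have hmp : MeasurePreserving (⇑e) volume volume := by
        rw [Measure.volume_eq_prod]
        have := (MeasurePreserving.id (volume : Measure ℝ)).prod
          (volume_measurePreserving_piCongrLeft (fun _ : Fin N => (Fin d → ℝ)) σ)
        convert this using 1
        all_goals rfl
      have hTswap : ∀ ψs t, T (em ψs) t = T ψs t := by
        intro ψs t
        simp only [hT_def]
        rw [← Equiv.sum_comp σ (fun j => ∫ y in S (ψs j) ∩ {y | t ≤ |y|}, f y)]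
        refine Finset.sum_congr rfl fun j _ => ?_
        rw [hem_apply]
      have hphat_swap : ∀ p : ℝ × (Fin N → (Fin d → ℝ)), phat (e p) = phat p := by
        intro p
        rw [hphat' (e p), hphat' p, he_apply]
        simp only
        rw [hTswap, hTswap]
      have hGswap : ∀ ψs, (∏ j, g (em ψs j)) = ∏ j, g (ψs j) := by
        intro ψs
        rw [← Equiv.prod_comp σ (fun j => g (ψs j))]
        refine Finset.prod_congr rfl fun j _ => ?_
        rw [hem_apply]
      have hJswap : ∀ p, J (e p) = Jk k p := by
        intro p
        rw [hJ (e p), he_apply, hJk_def]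
        simp only
        rw [hem_apply]
        have hσz : σ z = k := Equiv.swap_apply_left z k
        rw [hσz]
        congr 1
        funext φ
        rw [hGswap p.2]
      have hPswap : ∀ p : ℝ × (Fin N → (Fin d → ℝ)), e p ∈ P ↔ p ∈ P := by
        intro p
        simp only [hP_def, Set.mem_setOf_eq, hphat_swap]
      constructor
      · calc ∫ p, P.indicator J p
            = ∫ p, P.indicator J (e p) := (hmp.integral_comp e.measurableEmbedding _).symm
          _ = ∫ p, P.indicator (Jk k) p := by
              refine integral_congr_ae (Filter.Eventually.of_forall fun p => ?_)
              show P.indicator J (e p) = P.indicator (Jk k) p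
              by_cases hp : p ∈ P
              · rw [Set.indicator_of_mem ((hPswap p).mpr hp) J,
                  Set.indicator_of_mem hp, hJswap]
              · rw [Set.indicator_of_notMem (fun hep => hp ((hPswap p).mp hep)) J,
                  Set.indicator_of_notMem hp]
      · have hcomp : Integrable (J ∘ ⇑e) :=
          (hmp.integrable_comp_emb e.measurableEmbedding).mpr hJ_int
        have : (J ∘ ⇑e) = Jk k := funext hJswap
        rwa [this] at hcomp
    have hJkind_int : ∀ k : Fin N, Integrable (P.indicator (Jk k)) := fun k =>
      ((hconj k).2).indicator hP_meas
    set K : ℝ × (Fin N → (Fin d → ℝ)) → ℝ := fun p => ∑ k, Jk k p with hK_def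
    have hK : ∀ p, (∑ k, P.indicator (Jk k) p) = P.indicator K p := by
      intro p
      by_cases hp : p ∈ P
      · rw [Set.indicator_of_mem hp]
        exact Finset.sum_congr rfl fun k _ => Set.indicator_of_mem hp _
      · rw [Set.indicator_of_notMem hp]
        refine Finset.sum_eq_zero fun k _ => Set.indicator_of_notMem hp _
    have hsum : ∫ p, ∑ k, P.indicator (Jk k) p = (N:ℝ) * ∫ p, P.indicator J p := by
      rw [integral_finset_sum _ (fun k _ => hJkind_int k)]
      rw [Finset.sum_congr rfl (fun k _ => ((hconj k).1).symm)]
      rw [Finset.sum_const, Finset.card_univ, Fintype.card_fin, nsmul_eq_mul]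
    have hK_int : Integrable (P.indicator K) :=
      (integrable_finset_sum _ fun k _ => (hconj k).2).indicator hP_meas
    have hfub : ∫ p, P.indicator K p = ∫ ψs, ∫ φ, P.indicator K (φ, ψs) := by
      rw [Measure.volume_eq_prod]
      exact integral_prod_symm _ (by rwa [← Measure.volume_eq_prod])
    have hinner : ∀ ψs, (∫ φ, P.indicator K (φ, ψs)) = β * (T ψs 0 * G ψs) := by
      intro ψs
      set sl : Set ℝ := {φ : ℝ | phat (φ, ψs) ≤ β} with hsl_def
      have hsl_meas : MeasurableSet sl := by
        have hpre : sl = (fun φ : ℝ => (φ, ψs)) ⁻¹' P := rfl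
        rw [hpre]
        exact (measurable_id.prodMk measurable_const) hP_meas
      have hfun : (fun φ => P.indicator K (φ, ψs)) = sl.indicator (fun φ => h ψs φ * G ψs) := by
        funext φ
        by_cases hp : phat (φ, ψs) ≤ β
        · rw [Set.indicator_of_mem (show (φ, ψs) ∈ P from hp),
            Set.indicator_of_mem (show φ ∈ sl from hp)]
          have hterm : ∀ k : Fin N, Jk k (φ, ψs) = (S (ψs k)).indicator f φ * G ψs := by
            intro k
            simp only [hJk_def, hG_def]
            by_cases hφ : φ ∈ S (ψs k)
            · rw [Set.indicator_of_mem hφ, Set.indicator_of_mem hφ]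
            · rw [Set.indicator_of_notMem hφ, Set.indicator_of_notMem hφ, zero_mul]
          calc K (φ, ψs) = ∑ k, (S (ψs k)).indicator f φ * G ψs :=
                Finset.sum_congr rfl fun k _ => hterm k
            _ = (∑ k, (S (ψs k)).indicator f φ) * G ψs := (Finset.sum_mul _ _ _).symm
            _ = h ψs φ * G ψs := rfl
        · rw [Set.indicator_of_notMem (show (φ, ψs) ∉ P from hp),
            Set.indicator_of_notMem (show φ ∉ sl from hp)]
      rw [hfun, integral_indicator hsl_meas, integral_mul_const]
      have hkey : ∫ φ in sl, h ψs φ = β * T ψs 0 := by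
        rcases eq_or_lt_of_le (hT_nonneg ψs 0) with hW | hW
        · have hint0 : ∫ φ, h ψs φ = 0 := by
            have hres : ∫ φ, h ψs φ = ∫ φ in {φ : ℝ | (0:ℝ) ≤ |φ|}, h ψs φ := by
              rw [huniv0, Measure.restrict_univ]
            rw [hres, hht ψs 0, ← hW]
          have hhz : h ψs =ᵐ[volume] 0 :=
            (integral_eq_zero_iff_of_nonneg (fun φ => hh_nonneg ψs φ) (hh_int ψs)).mp hint0
          have hz0 : ∫ φ in sl, h ψs φ = 0 := by
            rw [integral_congr_ae (ae_restrict_of_ae hhz)]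
            simp
          rw [hz0, ← hW, mul_zero]
        · have hsl_eq : sl = {φ : ℝ | T ψs |φ| ≤ β * T ψs 0} := by
            ext φ
            simp only [hsl_def, mem_setOf_eq]
            rw [hphat' (φ, ψs)]
            exact div_le_iff₀ hW
          rw [hsl_eq]
          refine layer_aux (T ψs) (h ψs) (hcont ψs) (hT_anti ψs) (hT_small ψs) (hht ψs)
            _ (mul_nonneg hβ0 (le_of_lt hW)) ?_
          calc β * T ψs 0 ≤ 1 * T ψs 0 := mul_le_mul_of_nonneg_right hβ1 (le_of_lt hW)
            _ = T ψs 0 := one_mul _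
      rw [hkey, mul_assoc]
    calc (N:ℝ) * ∫ p in P, J p
        = (N:ℝ) * ∫ p, P.indicator J p := by rw [integral_indicator hP_meas]
      _ = ∫ p, ∑ k, P.indicator (Jk k) p := hsum.symm
      _ = ∫ p, P.indicator K p := integral_congr_ae (Filter.Eventually.of_forall fun p => hK p)
      _ = ∫ ψs, ∫ φ, P.indicator K (φ, ψs) := hfub
      _ = ∫ ψs, β * (T ψs 0 * G ψs) :=
          integral_congr_ae (Filter.Eventually.of_forall fun ψs => hinner ψs)
      _ = β * C := by rw [integral_const_mul, hC_def]
  intro α hα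
  obtain ⟨hα0, hα1⟩ := hα
  have h1 := master 1 zero_le_one le_rfl
  have hunivP : {p : ℝ × (Fin N → (Fin d → ℝ)) | phat p ≤ (1:ℝ)} = univ :=
    eq_univ_of_forall fun p => hphat_le_one p
  rw [hunivP, Measure.restrict_univ, one_mul] at h1
  have hα' := master α hα0 hα1
  rw [← h1] at hα'
  have hNne : (N:ℝ) ≠ 0 := Nat.cast_ne_zero.mpr hN.ne'
  have hx : ∫ p in {p | phat p ≤ α}, J p = α * ∫ p, J p := by
    have h2 : (N:ℝ) * ∫ p in {p | phat p ≤ α}, J p = (N:ℝ) * (α * ∫ p, J p) := by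
      rw [hα']; ring
    exact mul_left_cancel₀ hNne h2
  rw [hx, mul_div_assoc, div_self (ne_of_gt hJpos), mul_one]
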